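/- (Theorem 3, η-coordinates) For every η ∈ U and all x, y ∈ S⁺, the second partial derivative of φ satisfies ∂²φ(η)/∂η(x)∂η(y) = Σ_{s∈S} μ(s,x) μ(s,y) p_η(s)^{-1}. -/

import Mathlib

local instance {S : Type*} [PartialOrder S] [DecidableEq S]
    [DecidableRel ((· ≤ ·) : S → S → Prop)] :
    DecidableRel ((· < ·) : S → S → Prop) :=
  fun a b => decidable_of_iff (a ≤ b ∧ a ≠ b) lt_iff_le_and_ne.symm

/-- The extension of `η : ℝ^{S⁺}` to `S` with `η(⊥) = 1`. -/
noncomputable def etaBar {S : Type*} [PartialOrder S] [OrderBot S] [DecidableEq S]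
    (η : {x : S // x ≠ ⊥} → ℝ) (s : S) : ℝ :=
  if h : s = ⊥ then 1 else η ⟨s, h⟩

/-- `p_η(x) = Σ_{s ≥ x} μ(x,s) η(s)`, where `η(⊥) = 1`. -/
noncomputable def pEta {S : Type*} [Fintype S] [PartialOrder S] [OrderBot S] [DecidableEq S]
    [DecidableRel ((· ≤ ·) : S → S → Prop)]
    (mu : S → S → ℤ) (η : {x : S // x ≠ ⊥} → ℝ) (x : S) : ℝ :=
  ∑ s ∈ Finset.univ.filter (fun s => x ≤ s), (mu x s : ℝ) * etaBar η s

/-- `φ(η) = Σ_{x∈S} p_η(x) log p_η(x)`. -/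
noncomputable def phi {S : Type*} [Fintype S] [PartialOrder S] [OrderBot S] [DecidableEq S]
    [DecidableRel ((· ≤ ·) : S → S → Prop)]
    (mu : S → S → ℤ) (η : {x : S // x ≠ ⊥} → ℝ) : ℝ :=
  ∑ x : S, pEta mu η x * Real.log (pEta mu η x)

/-- Partial derivative of a function `f : ℝ^{S⁺} → ℝ` with respect to the coordinate `x`. -/
noncomputable def pd {S : Type*} [Fintype S] [PartialOrder S] [OrderBot S] [DecidableEq S]
    (f : ({x : S // x ≠ ⊥} → ℝ) → ℝ) (x : {x : S // x ≠ ⊥})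
    (η : {x : S // x ≠ ⊥} → ℝ) : ℝ :=
  deriv (fun t => f (Function.update η x t)) (η x)

lemma etaBar_update {S : Type*} [PartialOrder S] [OrderBot S] [DecidableEq S]
    (η : {x : S // x ≠ ⊥} → ℝ) (x : {x : S // x ≠ ⊥}) (t : ℝ) (s : S) :
    etaBar (Function.update η x t) s = if s = (x : S) then t else etaBar η s := by
  unfold etaBar
  by_cases h : s = ⊥
  · subst h
    rw [if_neg (fun he => x.2 he.symm), dif_pos rfl, dif_pos rfl]
  · rw [dif_neg h, dif_neg h]
    by_cases hx : s = (x : S)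
    · rw [if_pos hx, Function.update_apply, if_pos (Subtype.ext hx)]
    · rw [if_neg hx, Function.update_apply, if_neg (fun he => hx (congrArg Subtype.val he))]

lemma pEta_update {S : Type*} [Fintype S] [PartialOrder S] [OrderBot S] [DecidableEq S]
    [DecidableRel ((· ≤ ·) : S → S → Prop)]
    (mu : S → S → ℤ) (hmu_nle : ∀ x y : S, ¬ x ≤ y → mu x y = 0)
    (η : {x : S // x ≠ ⊥} → ℝ) (x : {x : S // x ≠ ⊥}) (t : ℝ) (s : S) :
    pEta mu (Function.update η x t) s = pEta mu η s + (mu s x : ℝ) * (t - η x) := by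
  unfold pEta
  have hterm : ∀ u ∈ Finset.univ.filter (fun u => s ≤ u),
      (mu s u : ℝ) * etaBar (Function.update η x t) u
        = (mu s u : ℝ) * etaBar η u
          + (if u = (x : S) then (mu s u : ℝ) * (t - η x) else 0) := by
    intro u _
    rw [etaBar_update]
    by_cases hx : u = (x : S)
    · rw [if_pos hx, if_pos hx]
      have : etaBar η u = η x := by
        subst hx; unfold etaBar; rw [dif_neg x.2]
      rw [this]; ring
    · rw [if_neg hx, if_neg hx, add_zero]
  rw [Finset.sum_congr rfl hterm, Finset.sum_add_distrib, Finset.sum_ite_eq']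
  by_cases hsx : s ≤ (x : S)
  · rw [if_pos (by simp [hsx])]
  · rw [if_neg (by simp [hsx]), hmu_nle s x hsx]
    push_cast; ring

lemma hasDerivAt_phi_update {S : Type*} [Fintype S] [PartialOrder S] [OrderBot S]
    [DecidableEq S] [DecidableRel ((· ≤ ·) : S → S → Prop)]
    (mu : S → S → ℤ) (hmu_nle : ∀ x y : S, ¬ x ≤ y → mu x y = 0)
    (η : {x : S // x ≠ ⊥} → ℝ) (hU : ∀ s : S, 0 < pEta mu η s) (y : {x : S // x ≠ ⊥}) :
    HasDerivAt (fun t => phi mu (Function.update η y t))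
      (∑ s : S, (mu s (y : S) : ℝ) * (Real.log (pEta mu η s) + 1)) (η y) := by
  have hfun : (fun t => phi mu (Function.update η y t))
      = fun t => ∑ s : S, (pEta mu η s + (mu s y : ℝ) * (t - η y))
          * Real.log (pEta mu η s + (mu s y : ℝ) * (t - η y)) := by
    funext t
    unfold phi
    exact Finset.sum_congr rfl fun s _ => by rw [pEta_update mu hmu_nle]
  rw [hfun]
  have := HasDerivAt.fun_sum (u := Finset.univ)
    (A := fun (s : S) t => (pEta mu η s + (mu s y : ℝ) * (t - η y))
          * Real.log (pEta mu η s + (mu s y : ℝ) * (t - η y)))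
    (A' := fun s => (Real.log (pEta mu η s) + 1) * (mu s y : ℝ))
    (fun s _ => by
      have h1 : HasDerivAt (fun t : ℝ => pEta mu η s + (mu s y : ℝ) * (t - η y))
          ((mu s y : ℝ)) (η y) := by
        simpa using (((hasDerivAt_id (η y)).sub_const (η y)).const_mul
          ((mu s y : ℝ))).const_add (pEta mu η s)
      have h2 : HasDerivAt (fun u : ℝ => u * Real.log u) (Real.log (pEta mu η s) + 1)
          ((fun t : ℝ => pEta mu η s + (mu s y : ℝ) * (t - η y)) (η y)) := by
        simpa using Real.hasDerivAt_mul_log (hU s).ne'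
      exact h2.comp (η y) h1)
  exact this.congr_deriv (Finset.sum_congr rfl fun s _ => by ring)

lemma pd_phi_eq {S : Type*} [Fintype S] [PartialOrder S] [OrderBot S]
    [DecidableEq S] [DecidableRel ((· ≤ ·) : S → S → Prop)]
    (mu : S → S → ℤ) (hmu_nle : ∀ x y : S, ¬ x ≤ y → mu x y = 0)
    (η : {x : S // x ≠ ⊥} → ℝ) (hU : ∀ s : S, 0 < pEta mu η s) (y : {x : S // x ≠ ⊥}) :
    pd (phi mu) y η = ∑ s : S, (mu s (y : S) : ℝ) * (Real.log (pEta mu η s) + 1) :=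
  (hasDerivAt_phi_update mu hmu_nle η hU y).deriv

/-- (Theorem 3, η-coordinates) The second partial derivative of `φ` satisfies
`∂²φ(η)/∂η(x)∂η(y) = Σ_{s∈S} μ(s,x) μ(s,y) p_η(s)⁻¹` for every `η ∈ U`. -/
theorem hasDerivAt_pd_phi {S : Type*} [Fintype S] [PartialOrder S] [OrderBot S]
    [DecidableEq S] [DecidableRel ((· ≤ ·) : S → S → Prop)]
    (mu : S → S → ℤ)
    (hmu_self : ∀ x : S, mu x x = 1)
    (hmu_lt : ∀ x y : S, x < y →
      mu x y = -∑ s ∈ Finset.univ.filter (fun s => x ≤ s ∧ s < y), mu x s)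
    (hmu_nle : ∀ x y : S, ¬ x ≤ y → mu x y = 0)
    (η : {x : S // x ≠ ⊥} → ℝ) (hU : ∀ s : S, 0 < pEta mu η s) (x y : {x : S // x ≠ ⊥}) :
    HasDerivAt (fun t => pd (phi mu) y (Function.update η x t))
      (∑ s : S, (mu s (x : S) : ℝ) * (mu s (y : S) : ℝ) * (pEta mu η s)⁻¹)
      (η x) := by
  -- Eventual positivity
  have hev : ∀ᶠ t in nhds (η x), ∀ s : S, 0 < pEta mu (Function.update η x t) s := by
    rw [Filter.eventually_all]
    intro s
    have hc : Continuous (fun t : ℝ => pEta mu η s + (mu s x : ℝ) * (t - η x)) := by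
      continuity
    have := (hc.tendsto (η x)).eventually (eventually_gt_nhds (by simpa using hU s))
    filter_upwards [this] with t ht
    rw [pEta_update mu hmu_nle]
    simpa using ht
  have hFG : (fun t => pd (phi mu) y (Function.update η x t))
      =ᶠ[nhds (η x)] fun t => ∑ s : S,
        (mu s (y : S) : ℝ) * (Real.log (pEta mu η s + (mu s x : ℝ) * (t - η x)) + 1) := by
    filter_upwards [hev] with t ht
    rw [pd_phi_eq mu hmu_nle _ ht y]
    exact Finset.sum_congr rfl fun s _ => by rw [pEta_update mu hmu_nle]
  have hG : HasDerivAt (fun t => ∑ s : S,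
        (mu s (y : S) : ℝ) * (Real.log (pEta mu η s + (mu s x : ℝ) * (t - η x)) + 1))
      (∑ s : S, (mu s (x : S) : ℝ) * (mu s (y : S) : ℝ) * (pEta mu η s)⁻¹) (η x) := by
    have := HasDerivAt.fun_sum (u := Finset.univ)
      (A := fun (s : S) t => (mu s (y : S) : ℝ)
          * (Real.log (pEta mu η s + (mu s x : ℝ) * (t - η x)) + 1))
      (A' := fun s => (mu s (y : S) : ℝ) * ((mu s (x : S) : ℝ) / pEta mu η s))
      (fun s _ => by
        have h1 : HasDerivAt (fun t : ℝ => pEta mu η s + (mu s x : ℝ) * (t - η x))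
            ((mu s x : ℝ)) (η x) := by
          simpa using (((hasDerivAt_id (η x)).sub_const (η x)).const_mul
            ((mu s x : ℝ))).const_add (pEta mu η s)
        have h2 : HasDerivAt (fun t : ℝ =>
            Real.log (pEta mu η s + (mu s x : ℝ) * (t - η x)))
            ((mu s x : ℝ) / pEta mu η s) (η x) := by
          have := h1.log (by simpa using (hU s).ne')
          simpa using this
        exact (h2.add_const 1).const_mul ((mu s (y : S) : ℝ)))
    exact this.congr_deriv (Finset.sum_congr rfl fun s _ => by simp [div_eq_mul_inv]; ring)
  exact hG.congr_of_eventuallyEq hFG
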